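/- Let a, b be nonnegative integers and let λ, μ be complex numbers with Re(λ) < 1, Re(μ) < 1, and Re(λ+μ) < 1. Then ∫₀¹ [∫_x^1 (y/x)^λ (1/y)(ln(y/x))^a/a! dy][∫_x^1 (y/x)^μ (1/y)(ln(y/x))^b/b! dy] dx = Σ_{l=0}^{a} ((b+l)!/(l! b!)) (1−λ)^{−(a−l+1)} (1−λ−μ)^{−(b+l+1)} + Σ_{l=0}^{b} ((a+l)!/(l! a!)) (1−μ)^{−(b−l+1)} (1−λ−μ)^{−(a+l+1)}. -/

import Mathlib

open Complex MeasureTheory Set Filter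

noncomputable def Fint (n : ℕ) (c : ℂ) (t : ℝ) : ℂ :=
  ∫ u in (0:ℝ)..t, Complex.exp (c * u) * (u:ℂ) ^ n / (n.factorial : ℂ)

lemma contAux (n : ℕ) (c : ℂ) :
    Continuous (fun u : ℝ => Complex.exp (c * u) * (u:ℂ) ^ n / (n.factorial : ℂ)) := by
  fun_prop

lemma Fint_hasDerivAt (n : ℕ) (c : ℂ) (t : ℝ) :
    HasDerivAt (Fint n c) (Complex.exp (c * t) * (t:ℂ) ^ n / (n.factorial : ℂ)) t := by
  exact intervalIntegral.integral_hasDerivAt_right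
    ((contAux n c).intervalIntegrable _ _)
    ((contAux n c).stronglyMeasurableAtFilter _ _)
    (contAux n c).continuousAt

lemma Fint_zero (n : ℕ) (c : ℂ) : Fint n c 0 = 0 := by simp [Fint]

lemma Fint_norm_le (n : ℕ) (c : ℂ) {t : ℝ} (ht : 0 ≤ t) :
    ‖Fint n c t‖ ≤ Real.exp (max c.re 0 * t) * t ^ (n+1) / (n.factorial : ℝ) := by
  have h : ∀ u ∈ Set.uIoc (0:ℝ) t, ‖Complex.exp (c * u) * (u:ℂ) ^ n / (n.factorial : ℂ)‖ ≤
      Real.exp (max c.re 0 * t) * t ^ n / (n.factorial : ℝ) := by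
    intro u hu
    rw [Set.uIoc_of_le ht] at hu
    obtain ⟨hu0, hut⟩ := hu
    rw [norm_div, norm_mul]
    have h1 : ‖Complex.exp (c * u)‖ ≤ Real.exp (max c.re 0 * t) := by
      rw [Complex.norm_exp]
      apply Real.exp_le_exp.2
      have : (c * (u:ℂ)).re = c.re * u := by simp [Complex.mul_re]
      rw [this]
      rcases le_total c.re 0 with h | h
      · calc c.re * u ≤ 0 := mul_nonpos_of_nonpos_of_nonneg h hu0.le
          _ ≤ max c.re 0 * t := mul_nonneg (le_max_right _ _) ht
      · calc c.re * u ≤ c.re * t := mul_le_mul_of_nonneg_left hut h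
          _ ≤ max c.re 0 * t := mul_le_mul_of_nonneg_right (le_max_left _ _) ht
    have h2 : ‖((u:ℂ)) ^ n‖ ≤ t ^ n := by
      rw [norm_pow, Complex.norm_real, Real.norm_eq_abs, _root_.abs_of_nonneg hu0.le]
      exact pow_le_pow_left₀ hu0.le hut n
    have h3 : ‖((n.factorial : ℂ))‖ = (n.factorial : ℝ) := by
      simp
    rw [h3]
    have hfac : (0:ℝ) < n.factorial := by positivity
    gcongr
  calc ‖Fint n c t‖ ≤ Real.exp (max c.re 0 * t) * t ^ n / (n.factorial : ℝ) * |t - 0| :=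
        intervalIntegral.norm_integral_le_of_norm_le_const h
    _ = Real.exp (max c.re 0 * t) * t ^ (n+1) / (n.factorial : ℝ) := by
        rw [sub_zero, _root_.abs_of_nonneg ht]; ring

lemma integrableOn_poly_exp (k : ℕ) {e : ℝ} (he : 0 < e) :
    IntegrableOn (fun t : ℝ => t ^ k * Real.exp (-e * t)) (Ioi 0) := by
  have h := integrableOn_rpow_mul_exp_neg_mul_rpow (p := 1) (s := (k:ℝ)) (b := e)
    (by exact lt_of_lt_of_le (by norm_num) (Nat.cast_nonneg k)) one_pos he
  refine h.congr_fun (fun x hx => ?_) measurableSet_Ioi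
  dsimp only
  rw [Real.rpow_one, Real.rpow_natCast]

lemma integrable_of_bound {f : ℝ → ℂ} (hf : AEStronglyMeasurable f (volume.restrict (Ioi 0)))
    (C : ℝ) (k : ℕ) {e : ℝ} (he : 0 < e)
    (hb : ∀ t ∈ Ioi (0:ℝ), ‖f t‖ ≤ C * (t ^ k * Real.exp (-e * t))) :
    IntegrableOn f (Ioi 0) := by
  refine Integrable.mono' ((integrableOn_poly_exp k he).const_mul C) hf ?_
  filter_upwards [ae_restrict_mem measurableSet_Ioi] with t ht
  exact hb t ht

lemma tendsto_of_bound {f : ℝ → ℂ} (C : ℝ) (k : ℕ) {e : ℝ} (he : 0 < e)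
    (hb : ∀ t ∈ Ioi (0:ℝ), ‖f t‖ ≤ C * (t ^ k * Real.exp (-e * t))) :
    Tendsto f atTop (nhds 0) := by
  apply squeeze_zero_norm' (a := fun t => C * (t ^ k * Real.exp (-e * t)))
  · filter_upwards [eventually_gt_atTop 0] with t ht using hb t ht
  · have h := (tendsto_rpow_mul_exp_neg_mul_atTop_nhds_zero (k:ℝ) e he).const_mul C
    rw [mul_zero] at h
    apply h.congr'
    filter_upwards [eventually_gt_atTop 0] with t ht
    rw [Real.rpow_natCast]

lemma hasDerivAt_cexp_neg (s : ℂ) (t : ℝ) :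
    HasDerivAt (fun t : ℝ => Complex.exp (-(s*t))) (-s * Complex.exp (-(s*t))) t := by
  have h2 : HasDerivAt (fun z : ℂ => -(s*z)) (-s) (t:ℂ) := by
    have h := ((hasDerivAt_id (t:ℂ)).const_mul s).neg
    simp only [mul_one] at h
    exact h
  have h : HasDerivAt (fun z : ℂ => Complex.exp (-(s*z)))
      (-s * Complex.exp (-(s*(t:ℂ)))) (t:ℂ) := by
    have h3 := (Complex.hasDerivAt_exp (-(s*(t:ℂ)))).comp (t:ℂ) h2
    exact h3.congr_deriv (by ring)
  exact h.comp_ofReal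

lemma norm_cexp_neg (s : ℂ) (t : ℝ) : ‖Complex.exp (-(s*t))‖ = Real.exp (-s.re * t) := by
  rw [Complex.norm_exp]
  congr 1
  simp [Complex.mul_re]

lemma parts_lemma {s : ℂ} {g g' : ℝ → ℂ}
    (hderiv : ∀ t : ℝ, HasDerivAt g (g' t) t) (hg0 : g 0 = 0)
    (hint : IntegrableOn (fun t : ℝ => Complex.exp (-(s*t)) * g t) (Ioi 0))
    (hint' : IntegrableOn (fun t : ℝ => Complex.exp (-(s*t)) * g' t) (Ioi 0))
    (htend : Tendsto (fun t : ℝ => Complex.exp (-(s*t)) * g t) atTop (nhds 0)) :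
    (∫ t in Ioi (0:ℝ), Complex.exp (-(s*t)) * g' t)
      = s * ∫ t in Ioi (0:ℝ), Complex.exp (-(s*t)) * g t := by
  have hgc : Continuous g := continuous_iff_continuousAt.2 fun t => (hderiv t).continuousAt
  have hf : ∀ t : ℝ, HasDerivAt (fun t : ℝ => Complex.exp (-(s*t)) * g t)
      (Complex.exp (-(s*t)) * g' t + (-s) * (Complex.exp (-(s*t)) * g t)) t := by
    intro t
    have := (hasDerivAt_cexp_neg s t).mul (hderiv t)
    refine this.congr_deriv ?_
    ring
  have hint2 : IntegrableOn
      (fun t : ℝ => Complex.exp (-(s*t)) * g' t + (-s) * (Complex.exp (-(s*t)) * g t)) (Ioi 0) :=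
    hint'.add (hint.const_mul (-s))
  have key := integral_Ioi_of_hasDerivAt_of_tendsto
    (f := fun t => Complex.exp (-(s*t)) * g t)
    (Continuous.continuousWithinAt (by fun_prop)) (fun x _ => hf x) hint2 htend
  rw [MeasureTheory.integral_add hint' (hint.const_mul (-s)),
    MeasureTheory.integral_const_mul] at key
  simp only [Complex.ofReal_zero, mul_zero, neg_zero, Complex.exp_zero, one_mul, hg0,
    mul_zero, sub_zero] at key
  linear_combination key

lemma integrable_cexp_pow (n : ℕ) {s : ℂ} (hs : 0 < s.re) :
    IntegrableOn (fun t : ℝ => Complex.exp (-(s*t)) * (t:ℂ)^n) (Ioi 0) := by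
  apply integrable_of_bound (Continuous.aestronglyMeasurable (by fun_prop)) 1 n hs
  intro t ht
  rw [norm_mul, norm_cexp_neg, norm_pow, Complex.norm_real, Real.norm_eq_abs,
    _root_.abs_of_nonneg (le_of_lt ht), one_mul, mul_comm]

lemma tendsto_cexp_pow (n : ℕ) {s : ℂ} (hs : 0 < s.re) :
    Tendsto (fun t : ℝ => Complex.exp (-(s*t)) * (t:ℂ)^n) atTop (nhds 0) := by
  apply tendsto_of_bound 1 n hs
  intro t ht
  rw [norm_mul, norm_cexp_neg, norm_pow, Complex.norm_real, Real.norm_eq_abs,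
    _root_.abs_of_nonneg (le_of_lt ht), one_mul, mul_comm]

lemma laplace (n : ℕ) {s : ℂ} (hs : 0 < s.re) :
    (∫ t in Ioi (0:ℝ), Complex.exp (-(s*t)) * (t:ℂ)^n) = (n.factorial : ℂ) / s^(n+1) := by
  have hs0 : s ≠ 0 := fun h => by simp [h] at hs
  induction n with
  | zero =>
    have key := integral_Ioi_of_hasDerivAt_of_tendsto
      (f := fun t : ℝ => -(Complex.exp (-(s*t)) / s))
      (f' := fun t : ℝ => Complex.exp (-(s*t)) * (t:ℂ)^0) (m := 0)
      (Continuous.continuousWithinAt (by fun_prop)) ?_ (integrable_cexp_pow 0 hs) ?_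
    · rw [key]
      simp [hs0]
    · intro x _
      have := ((hasDerivAt_cexp_neg s x).div_const s).neg
      refine this.congr_deriv ?_
      field_simp
    · have := (tendsto_cexp_pow 0 hs).div_const s |>.neg
      simpa using this
  | succ n ih =>
    have key := parts_lemma (g := fun t : ℝ => (t:ℂ)^(n+1))
      (g' := fun t : ℝ => (n+1 : ℂ) * (t:ℂ)^n) ?_ (by simp)
      (integrable_cexp_pow (n+1) hs) ?_ ?_
    · have h2 : (∫ t in Ioi (0:ℝ), Complex.exp (-(s*t)) * ((n+1:ℂ) * (t:ℂ)^n))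
          = (n+1:ℂ) * ((n.factorial : ℂ) / s^(n+1)) := by
        rw [← ih]
        rw [← MeasureTheory.integral_const_mul]
        congr 1; ext t; ring
      rw [h2] at key
      have hJ : (∫ t in Ioi (0:ℝ), Complex.exp (-(s*t)) * (t:ℂ)^(n+1))
          = (n+1:ℂ) * ((n.factorial : ℂ) / s^(n+1)) / s := by
        rw [eq_div_iff hs0]
        linear_combination -key
      rw [hJ, Nat.factorial_succ]
      have hsp : s^(n+1) ≠ 0 := pow_ne_zero _ hs0
      push_cast
      field_simp
      ring
    · intro t
      have := hasDerivAt_pow (n+1) (t:ℂ)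
      simpa using this.comp_ofReal
    · exact MeasureTheory.IntegrableOn.congr_fun ((integrable_cexp_pow n hs).const_mul (n+1:ℂ))
        (fun t _ => by ring) measurableSet_Ioi
    · exact tendsto_cexp_pow (n+1) hs

lemma exp_merge (l m : ℂ) (t : ℝ) :
    Complex.exp (-((1-l)*t)) * Complex.exp (m*t) = Complex.exp (-((1-l-m)*t)) := by
  rw [← Complex.exp_add]
  congr 1
  ring

lemma Fint_continuous (n : ℕ) (c : ℂ) : Continuous (Fint n c) :=
  continuous_iff_continuousAt.2 fun t => (Fint_hasDerivAt n c t).continuousAt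

lemma bound_A (a b : ℕ) (l m : ℂ) : ∀ t ∈ Ioi (0:ℝ),
    ‖Complex.exp (-((1-l)*t)) * ((t:ℂ)^a / (a.factorial:ℂ) * Fint b m t)‖ ≤
      (1/((a.factorial : ℝ) * (b.factorial : ℝ))) *
        (t^(a+b+1) * Real.exp (-(1 - l.re - max m.re 0) * t)) := by
  intro t ht
  have ht' : (0:ℝ) ≤ t := le_of_lt ht
  have h1 : ‖Complex.exp (-((1-l)*t))‖ = Real.exp (-(1 - l.re) * t) := by
    rw [norm_cexp_neg, Complex.sub_re, Complex.one_re]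
  calc ‖Complex.exp (-((1-l)*t)) * ((t:ℂ)^a / (a.factorial:ℂ) * Fint b m t)‖
      = Real.exp (-(1 - l.re) * t) * ((t^a / (a.factorial:ℝ)) * ‖Fint b m t‖) := by
        rw [norm_mul, norm_mul, norm_div, norm_pow, Complex.norm_real, Real.norm_eq_abs,
          _root_.abs_of_nonneg ht', h1, Complex.norm_natCast]
    _ ≤ Real.exp (-(1 - l.re) * t) * ((t^a / (a.factorial:ℝ)) *
          (Real.exp (max m.re 0 * t) * t ^ (b+1) / (b.factorial : ℝ))) := by
        gcongr
        exact Fint_norm_le b m ht'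
    _ = (1/((a.factorial : ℝ) * (b.factorial : ℝ))) *
        (t^(a+b+1) * Real.exp (-(1 - l.re - max m.re 0) * t)) := by
        rw [show -(1 - l.re - max m.re 0) * t = (-(1 - l.re) * t) + max m.re 0 * t by ring,
          Real.exp_add, pow_add, pow_succ]
        ring

lemma integrable_A (a b : ℕ) (l m : ℂ) (hl : l.re < 1) (hlm : l.re + m.re < 1) :
    IntegrableOn (fun t : ℝ =>
      Complex.exp (-((1-l)*t)) * ((t:ℂ)^a / (a.factorial:ℂ) * Fint b m t)) (Ioi 0) := by
  have hε : 0 < 1 - l.re - max m.re 0 := by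
    rcases max_choice m.re 0 with h | h <;> rw [h] <;> linarith
  exact integrable_of_bound (Continuous.aestronglyMeasurable
    (by exact ((by fun_prop : Continuous fun t : ℝ => Complex.exp (-((1-l)*t)) * ((t:ℂ)^a / (a.factorial:ℂ))).mul (Fint_continuous b m)).congr (fun t => by rw [Pi.mul_apply]; ring)))
    _ _ hε (bound_A a b l m)

lemma tendsto_A (a b : ℕ) (l m : ℂ) (hl : l.re < 1) (hlm : l.re + m.re < 1) :
    Tendsto (fun t : ℝ =>
      Complex.exp (-((1-l)*t)) * ((t:ℂ)^a / (a.factorial:ℂ) * Fint b m t)) atTop (nhds 0) := by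
  have hε : 0 < 1 - l.re - max m.re 0 := by
    rcases max_choice m.re 0 with h | h <;> rw [h] <;> linarith
  exact tendsto_of_bound _ _ hε (bound_A a b l m)

lemma sum_succ_eq (a b : ℕ) (u v : ℂ) :
    (∑ i ∈ Finset.range (a+1+1),
        ((b+i).factorial : ℂ) / ((i.factorial:ℂ) * (b.factorial:ℂ)) * u^(a+1-i+1) * v^(b+i+1))
    = u * ((∑ i ∈ Finset.range (a+1),
          ((b+i).factorial : ℂ) / ((i.factorial:ℂ) * (b.factorial:ℂ)) * u^(a-i+1) * v^(b+i+1))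
        + ((a+b+1).factorial : ℂ) / (((a+1).factorial:ℂ) * (b.factorial:ℂ)) * v^(a+b+2)) := by
  rw [Finset.sum_range_succ, mul_add, Finset.mul_sum]
  congr 1
  · apply Finset.sum_congr rfl
    intro i hi
    have h : a + 1 - i = (a - i) + 1 := by
      have := Finset.mem_range.mp hi
      omega
    rw [h, pow_succ]
    ring
  · have h : a + 1 - (a+1) = 0 := by omega
    have e1 : b + (a+1) = a + b + 1 := by omega
    rw [h, e1]
    ring

lemma Alemma (b : ℕ) (l m : ℂ) (hl : l.re < 1) (hlm : l.re + m.re < 1) (a : ℕ) :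
    (∫ t in Ioi (0:ℝ), Complex.exp (-((1-l)*t)) * ((t:ℂ)^a / (a.factorial:ℂ) * Fint b m t))
      = ∑ i ∈ Finset.range (a+1),
          ((b+i).factorial : ℂ) / ((i.factorial:ℂ) * (b.factorial:ℂ))
            * ((1-l)⁻¹)^(a-i+1) * ((1-l-m)⁻¹)^(b+i+1) := by
  have hs2 : 0 < (1-l-m).re := by simp [Complex.sub_re]; linarith
  have hs1 : 0 < (1-l).re := by simp [Complex.sub_re]; linarith
  have hu0 : (1-l) ≠ 0 := fun h => by rw [h] at hs1; simp at hs1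
  have hv0 : (1-l-m) ≠ 0 := fun h => by rw [h] at hs2; simp at hs2
  have hbf : (b.factorial:ℂ) ≠ 0 := Nat.cast_ne_zero.2 b.factorial_pos.ne'
  induction a with
  | zero =>
    have hfun : (fun t : ℝ => Complex.exp (-((1-l)*t)) *
          ((t:ℂ)^0 / (((0:ℕ).factorial:ℕ):ℂ) * Fint b m t))
        = fun t : ℝ => Complex.exp (-((1-l)*t)) * Fint b m t := by
      funext t; simp
    have hint' : IntegrableOn (fun t : ℝ => Complex.exp (-((1-l)*t)) *
        (Complex.exp (m*t) * (t:ℂ)^b / (b.factorial:ℂ))) (Ioi 0) := by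
      refine MeasureTheory.IntegrableOn.congr_fun
        ((integrable_cexp_pow b hs2).const_mul ((b.factorial:ℂ)⁻¹)) (fun t _ => ?_)
        measurableSet_Ioi
      rw [← exp_merge l m t]
      field_simp
    have key := parts_lemma (s := 1-l) (g := Fint b m)
      (g' := fun t => Complex.exp (m*t) * (t:ℂ)^b / (b.factorial:ℂ))
      (Fint_hasDerivAt b m) (Fint_zero b m)
      (hfun ▸ integrable_A 0 b l m hl hlm) hint' (hfun ▸ tendsto_A 0 b l m hl hlm)
    have hL : (∫ t in Ioi (0:ℝ), Complex.exp (-((1-l)*t)) *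
          (Complex.exp (m*t) * (t:ℂ)^b / (b.factorial:ℂ)))
        = ((b.factorial:ℂ))⁻¹ * ((b.factorial:ℂ) / (1-l-m)^(b+1)) := by
      rw [← laplace b hs2, ← MeasureTheory.integral_const_mul]
      refine setIntegral_congr_fun measurableSet_Ioi (fun t _ => ?_)
      rw [← exp_merge l m t]
      field_simp
    rw [hfun]
    rw [show (∫ t in Ioi (0:ℝ), Complex.exp (-((1-l)*t)) * Fint b m t)
        = (1-l)⁻¹ * (((b.factorial:ℂ))⁻¹ * ((b.factorial:ℂ) / (1-l-m)^(b+1))) from by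
      rw [← hL, key, ← mul_assoc, inv_mul_cancel₀ hu0, one_mul]]
    rw [Finset.sum_range_one]
    simp only [Nat.sub_zero, Nat.add_zero, pow_one, Nat.factorial_zero, Nat.cast_one, one_mul]
    rw [inv_pow]
    field_simp
    rw [one_div, inv_pow, mul_assoc, mul_inv_cancel₀ (pow_ne_zero _ hv0)]
    ring
  | succ a ih =>
    have haf : (a.factorial:ℂ) ≠ 0 := Nat.cast_ne_zero.2 a.factorial_pos.ne'
    have haf1 : ((a+1).factorial:ℂ) ≠ 0 := Nat.cast_ne_zero.2 (a+1).factorial_pos.ne'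
    have hder : ∀ t : ℝ, HasDerivAt
        (fun t : ℝ => (t:ℂ)^(a+1) / (((a+1).factorial:ℕ):ℂ) * Fint b m t)
        ((t:ℂ)^a / (a.factorial:ℂ) * Fint b m t
          + (t:ℂ)^(a+1) / (((a+1).factorial:ℕ):ℂ) *
              (Complex.exp (m*t) * (t:ℂ)^b / (b.factorial:ℂ))) t := by
      intro t
      have h1 : HasDerivAt (fun t : ℝ => (t:ℂ)^(a+1) / (((a+1).factorial:ℕ):ℂ))
          ((a+1:ℂ) * (t:ℂ)^a / (((a+1).factorial:ℕ):ℂ)) t := by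
        have := (hasDerivAt_pow (a+1) (t:ℂ)).comp_ofReal
        simpa using this.div_const (((a+1).factorial:ℕ):ℂ)
      have h2 := h1.mul (Fint_hasDerivAt b m t)
      refine h2.congr_deriv ?_
      have hfa : (((a+1).factorial:ℕ) : ℂ) = (a+1 : ℂ) * (a.factorial : ℂ) := by
        rw [Nat.factorial_succ]; push_cast; ring
      rw [hfa]
      have ha0 : (a+1:ℂ) ≠ 0 := Nat.cast_add_one_ne_zero a
      field_simp
    have H2 : IntegrableOn (fun t : ℝ => Complex.exp (-((1-l)*t)) *
        ((t:ℂ)^(a+1) / (((a+1).factorial:ℕ):ℂ) *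
          (Complex.exp (m*t) * (t:ℂ)^b / (b.factorial:ℂ)))) (Ioi 0) := by
      refine MeasureTheory.IntegrableOn.congr_fun
        ((integrable_cexp_pow (a+1+b) hs2).const_mul
          (((((a+1).factorial:ℕ):ℂ) * (b.factorial:ℂ))⁻¹)) (fun t _ => ?_) measurableSet_Ioi
      rw [← exp_merge l m t]
      field_simp
      ring
    have hint' : IntegrableOn (fun t : ℝ => Complex.exp (-((1-l)*t)) *
        ((t:ℂ)^a / (a.factorial:ℂ) * Fint b m t
          + (t:ℂ)^(a+1) / (((a+1).factorial:ℕ):ℂ) *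
              (Complex.exp (m*t) * (t:ℂ)^b / (b.factorial:ℂ)))) (Ioi 0) := by
      refine MeasureTheory.IntegrableOn.congr_fun
        ((integrable_A a b l m hl hlm).add H2)
        (fun t _ => by simp only [Pi.add_apply]; ring) measurableSet_Ioi
    have key := parts_lemma (s := 1-l)
      (g := fun t : ℝ => (t:ℂ)^(a+1) / (((a+1).factorial:ℕ):ℂ) * Fint b m t)
      (g' := fun t : ℝ => (t:ℂ)^a / (a.factorial:ℂ) * Fint b m t
          + (t:ℂ)^(a+1) / (((a+1).factorial:ℕ):ℂ) *
              (Complex.exp (m*t) * (t:ℂ)^b / (b.factorial:ℂ)))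
      hder (by simp [Fint_zero]) (integrable_A (a+1) b l m hl hlm) hint'
      (tendsto_A (a+1) b l m hl hlm)
    have hD : (∫ t in Ioi (0:ℝ), Complex.exp (-((1-l)*t)) *
          ((t:ℂ)^(a+1) / (((a+1).factorial:ℕ):ℂ) *
            (Complex.exp (m*t) * (t:ℂ)^b / (b.factorial:ℂ))))
        = ((a+b+1).factorial : ℂ) / ((((a+1).factorial:ℕ):ℂ) * (b.factorial:ℂ))
            * ((1-l-m)⁻¹)^(a+b+2) := by
      have e3 : a+1+b = a+b+1 := by omega
      rw [show ((a+b+1).factorial : ℂ) / ((((a+1).factorial:ℕ):ℂ) * (b.factorial:ℂ))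
            * ((1-l-m)⁻¹)^(a+b+2)
          = ((((a+1).factorial:ℕ):ℂ) * (b.factorial:ℂ))⁻¹ *
              (((a+1+b).factorial : ℂ) / (1-l-m)^(a+1+b+1)) from by
        rw [e3, inv_pow]
        have : a+b+1+1 = a+b+2 := rfl
        rw [this]
        field_simp]
      rw [← laplace (a+1+b) hs2, ← MeasureTheory.integral_const_mul]
      refine setIntegral_congr_fun measurableSet_Ioi (fun t _ => ?_)
      rw [← exp_merge l m t]
      field_simp
      ring
    have hsplit : (∫ t in Ioi (0:ℝ), Complex.exp (-((1-l)*t)) *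
        ((t:ℂ)^a / (a.factorial:ℂ) * Fint b m t
          + (t:ℂ)^(a+1) / (((a+1).factorial:ℕ):ℂ) *
              (Complex.exp (m*t) * (t:ℂ)^b / (b.factorial:ℂ))))
        = (∑ i ∈ Finset.range (a+1),
            ((b+i).factorial : ℂ) / ((i.factorial:ℂ) * (b.factorial:ℂ))
              * ((1-l)⁻¹)^(a-i+1) * ((1-l-m)⁻¹)^(b+i+1))
          + ((a+b+1).factorial : ℂ) / ((((a+1).factorial:ℕ):ℂ) * (b.factorial:ℂ))
              * ((1-l-m)⁻¹)^(a+b+2) := by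
      rw [← ih, ← hD, ← MeasureTheory.integral_add (integrable_A a b l m hl hlm) H2]
      refine setIntegral_congr_fun measurableSet_Ioi (fun t _ => ?_)
      ring
    rw [sum_succ_eq]
    calc (∫ t in Ioi (0:ℝ), Complex.exp (-((1-l)*t)) *
          ((t:ℂ)^(a+1) / (((a+1).factorial:ℕ):ℂ) * Fint b m t))
        = (1-l)⁻¹ * ((1-l) * ∫ t in Ioi (0:ℝ), Complex.exp (-((1-l)*t)) *
            ((t:ℂ)^(a+1) / (((a+1).factorial:ℕ):ℂ) * Fint b m t)) := by
          rw [← mul_assoc, inv_mul_cancel₀ hu0, one_mul]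
      _ = (1-l)⁻¹ * ((∑ i ∈ Finset.range (a+1),
            ((b+i).factorial : ℂ) / ((i.factorial:ℂ) * (b.factorial:ℂ))
              * ((1-l)⁻¹)^(a-i+1) * ((1-l-m)⁻¹)^(b+i+1))
          + ((a+b+1).factorial : ℂ) / ((((a+1).factorial:ℕ):ℂ) * (b.factorial:ℂ))
              * ((1-l-m)⁻¹)^(a+b+2)) := by
          rw [← key, hsplit]

lemma inner_eq (n : ℕ) (c : ℂ) {x : ℝ} (hx : x ∈ Ioo (0:ℝ) 1) :
    (∫ y in x..1, ((y / x : ℝ) : ℂ) ^ c * (1 / (y:ℂ)) *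
        ((Real.log (y/x) : ℂ)) ^ n / (n.factorial : ℂ))
      = Fint n c (-Real.log x) := by
  obtain ⟨hx0, hx1⟩ := hx
  have hsub : Set.uIcc x 1 = Set.Icc x 1 := Set.uIcc_of_le hx1.le
  have key := intervalIntegral.integral_comp_smul_deriv
    (f := fun t => Real.log t - Real.log x) (f' := fun t => t⁻¹)
    (g := fun u : ℝ => Complex.exp (c * u) * (u:ℂ) ^ n / (n.factorial : ℂ))
    (a := x) (b := 1)
    (fun t ht => by
      rw [hsub] at ht
      exact (Real.hasDerivAt_log (lt_of_lt_of_le hx0 ht.1).ne').sub_const _)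
    (by
      rw [hsub]
      exact ContinuousOn.inv₀ continuousOn_id
        (fun t ht => (lt_of_lt_of_le hx0 ht.1).ne'))
    (contAux n c)
  simp only [Real.log_one, zero_sub, sub_self] at key
  simp only [Fint]
  rw [← key]
  apply intervalIntegral.integral_congr
  intro y hy
  rw [hsub] at hy
  have hy0 : 0 < y := lt_of_lt_of_le hx0 hy.1
  have hlog : Real.log (y / x) = Real.log y - Real.log x := Real.log_div hy0.ne' hx0.ne'
  have hcp : ((y / x : ℝ) : ℂ) ^ c = Complex.exp (c * ((Real.log (y/x) : ℝ) : ℂ)) := by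
    have hne : ((y / x : ℝ) : ℂ) ≠ 0 :=
      Complex.ofReal_ne_zero.2 (div_ne_zero hy0.ne' hx0.ne')
    rw [Complex.cpow_def_of_ne_zero hne, Complex.ofReal_log (by positivity), mul_comm]
  simp only [hcp, hlog]
  rw [Complex.real_smul]
  push_cast
  have : (y:ℂ) ≠ 0 := by exact_mod_cast hy0.ne'
  field_simp
  simp [Function.comp_apply]

lemma exp_split (c : ℂ) (t : ℝ) :
    Complex.exp (-(((1:ℂ)-c)*t)) = Complex.exp (-((1:ℂ)*t)) * Complex.exp (c*t) := by
  rw [← Complex.exp_add]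
  congr 1
  ring

lemma bound_J (a b : ℕ) (l m : ℂ) : ∀ t ∈ Ioi (0:ℝ),
    ‖Complex.exp (-((1:ℂ)*t)) * (Fint a l t * Fint b m t)‖ ≤
      (1/((a.factorial : ℝ) * (b.factorial : ℝ))) *
        (t^(a+b+2) * Real.exp (-(1 - max l.re 0 - max m.re 0) * t)) := by
  intro t ht
  have ht' : (0:ℝ) ≤ t := le_of_lt ht
  have h1 : ‖Complex.exp (-((1:ℂ)*t))‖ = Real.exp (-(1:ℝ) * t) := by
    rw [norm_cexp_neg, Complex.one_re]
  calc ‖Complex.exp (-((1:ℂ)*t)) * (Fint a l t * Fint b m t)‖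
      = Real.exp (-(1:ℝ) * t) * (‖Fint a l t‖ * ‖Fint b m t‖) := by
        rw [norm_mul, norm_mul, h1]
    _ ≤ Real.exp (-(1:ℝ) * t) * ((Real.exp (max l.re 0 * t) * t^(a+1) / (a.factorial:ℝ)) *
          (Real.exp (max m.re 0 * t) * t^(b+1) / (b.factorial:ℝ))) := by
        gcongr
        · exact Fint_norm_le a l ht'
        · exact Fint_norm_le b m ht'
    _ = (1/((a.factorial : ℝ) * (b.factorial : ℝ))) *
        (t^(a+b+2) * Real.exp (-(1 - max l.re 0 - max m.re 0) * t)) := by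
        rw [show -(1 - max l.re 0 - max m.re 0) * t
            = (-(1:ℝ) * t) + (max l.re 0 * t + max m.re 0 * t) by ring,
          Real.exp_add, Real.exp_add,
          show a+b+2 = (a+1)+(b+1) by omega, pow_add]
        ring

lemma eps_J (l m : ℂ) (hl : l.re < 1) (hm : m.re < 1) (hlm : l.re + m.re < 1) :
    0 < 1 - max l.re 0 - max m.re 0 := by
  rcases max_choice l.re 0 with h | h <;> rcases max_choice m.re 0 with h' | h' <;>
    rw [h, h'] <;> linarith

lemma integrable_J (a b : ℕ) (l m : ℂ) (hl : l.re < 1) (hm : m.re < 1)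
    (hlm : l.re + m.re < 1) :
    IntegrableOn (fun t : ℝ =>
      Complex.exp (-((1:ℂ)*t)) * (Fint a l t * Fint b m t)) (Ioi 0) :=
  integrable_of_bound (Continuous.aestronglyMeasurable
    ((by fun_prop : Continuous fun t : ℝ => Complex.exp (-((1:ℂ)*t))).mul
      ((Fint_continuous a l).mul (Fint_continuous b m))))
    _ _ (eps_J l m hl hm hlm) (bound_J a b l m)

lemma tendsto_J (a b : ℕ) (l m : ℂ) (hl : l.re < 1) (hm : m.re < 1)
    (hlm : l.re + m.re < 1) :
    Tendsto (fun t : ℝ =>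
      Complex.exp (-((1:ℂ)*t)) * (Fint a l t * Fint b m t)) atTop (nhds 0) :=
  tendsto_of_bound _ _ (eps_J l m hl hm hlm) (bound_J a b l m)

lemma Jlemma (a b : ℕ) (l m : ℂ) (hl : l.re < 1) (hm : m.re < 1)
    (hlm : l.re + m.re < 1) :
    (∫ t in Ioi (0:ℝ), Complex.exp (-((1:ℂ)*t)) * (Fint a l t * Fint b m t))
      = (∑ i ∈ Finset.range (a + 1),
          (((b + i).factorial : ℂ) / ((i.factorial : ℂ) * (b.factorial : ℂ))) *
            ((1 - l)⁻¹) ^ (a - i + 1) * ((1 - l - m)⁻¹) ^ (b + i + 1)) +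
      (∑ i ∈ Finset.range (b + 1),
          (((a + i).factorial : ℂ) / ((i.factorial : ℂ) * (a.factorial : ℂ))) *
            ((1 - m)⁻¹) ^ (b - i + 1) * ((1 - l - m)⁻¹) ^ (a + i + 1)) := by
  have hlm2 : m.re + l.re < 1 := by linarith
  have H1 : IntegrableOn (fun t : ℝ => Complex.exp (-((1:ℂ)*t)) *
      ((Complex.exp (l*t) * (t:ℂ)^a / (a.factorial:ℂ)) * Fint b m t)) (Ioi 0) := by
    refine MeasureTheory.IntegrableOn.congr_fun (integrable_A a b l m hl hlm)
      (fun t _ => ?_) measurableSet_Ioi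
    rw [exp_split l t]
    ring
  have H2 : IntegrableOn (fun t : ℝ => Complex.exp (-((1:ℂ)*t)) *
      (Fint a l t * (Complex.exp (m*t) * (t:ℂ)^b / (b.factorial:ℂ)))) (Ioi 0) := by
    refine MeasureTheory.IntegrableOn.congr_fun (integrable_A b a m l hm hlm2)
      (fun t _ => ?_) measurableSet_Ioi
    rw [exp_split m t]
    ring
  have hder : ∀ t : ℝ, HasDerivAt (fun t : ℝ => Fint a l t * Fint b m t)
      ((Complex.exp (l*t) * (t:ℂ)^a / (a.factorial:ℂ)) * Fint b m t
        + Fint a l t * (Complex.exp (m*t) * (t:ℂ)^b / (b.factorial:ℂ))) t :=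
    fun t => (Fint_hasDerivAt a l t).mul (Fint_hasDerivAt b m t)
  have hint' : IntegrableOn (fun t : ℝ => Complex.exp (-((1:ℂ)*t)) *
      ((Complex.exp (l*t) * (t:ℂ)^a / (a.factorial:ℂ)) * Fint b m t
        + Fint a l t * (Complex.exp (m*t) * (t:ℂ)^b / (b.factorial:ℂ)))) (Ioi 0) := by
    refine MeasureTheory.IntegrableOn.congr_fun (H1.add H2)
      (fun t _ => by simp only [Pi.add_apply]; ring) measurableSet_Ioi
  have key := parts_lemma (s := (1:ℂ))
    (g := fun t : ℝ => Fint a l t * Fint b m t)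
    (g' := fun t : ℝ => (Complex.exp (l*t) * (t:ℂ)^a / (a.factorial:ℂ)) * Fint b m t
        + Fint a l t * (Complex.exp (m*t) * (t:ℂ)^b / (b.factorial:ℂ)))
    hder (by simp [Fint_zero]) (integrable_J a b l m hl hm hlm) hint'
    (tendsto_J a b l m hl hm hlm)
  rw [one_mul] at key
  rw [← key]
  have e1 : (∫ t in Ioi (0:ℝ), Complex.exp (-((1-l)*t)) * ((t:ℂ)^a / (a.factorial:ℂ) * Fint b m t))
      = ∫ t in Ioi (0:ℝ), Complex.exp (-((1:ℂ)*t)) *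
          ((Complex.exp (l*t) * (t:ℂ)^a / (a.factorial:ℂ)) * Fint b m t) :=
    setIntegral_congr_fun measurableSet_Ioi (fun t _ => by rw [exp_split l t]; ring)
  have e2 : (∫ t in Ioi (0:ℝ), Complex.exp (-((1-m)*t)) * ((t:ℂ)^b / (b.factorial:ℂ) * Fint a l t))
      = ∫ t in Ioi (0:ℝ), Complex.exp (-((1:ℂ)*t)) *
          (Fint a l t * (Complex.exp (m*t) * (t:ℂ)^b / (b.factorial:ℂ))) :=
    setIntegral_congr_fun measurableSet_Ioi (fun t _ => by rw [exp_split m t]; ring)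
  have e3 := Alemma a m l hm hlm2 b
  rw [show (1:ℂ)-m-l = 1-l-m from by ring] at e3
  rw [← Alemma b l m hl hlm a, ← e3, e1, e2, ← MeasureTheory.integral_add H1 H2]
  exact setIntegral_congr_fun measurableSet_Ioi (fun t _ => by ring)

/-- Remark 5.2 integral formula: for nonnegative integers `a, b` and complex
`λ, μ` with `Re λ < 1`, `Re μ < 1`, `Re(λ+μ) < 1`,
`∫₀¹ [∫_x^1 (y/x)^λ (1/y)(ln(y/x))^a/a! dy][∫_x^1 (y/x)^μ (1/y)(ln(y/x))^b/b! dy] dx`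
equals the stated double sum. -/
theorem stmt10 (a b : ℕ) (l m : ℂ) (hl : l.re < 1) (hm : m.re < 1) (hlm : (l + m).re < 1) :
    (∫ x in (0:ℝ)..1,
        (∫ y in x..1, ((y / x : ℝ) : ℂ) ^ l * (1 / (y : ℂ)) *
            ((Real.log (y / x) : ℂ)) ^ a / (a.factorial : ℂ)) *
        (∫ y in x..1, ((y / x : ℝ) : ℂ) ^ m * (1 / (y : ℂ)) *
            ((Real.log (y / x) : ℂ)) ^ b / (b.factorial : ℂ))) =
      (∑ i ∈ Finset.range (a + 1),
          (((b + i).factorial : ℂ) / ((i.factorial : ℂ) * (b.factorial : ℂ))) *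
            ((1 - l)⁻¹) ^ (a - i + 1) * ((1 - l - m)⁻¹) ^ (b + i + 1)) +
      (∑ i ∈ Finset.range (b + 1),
          (((a + i).factorial : ℂ) / ((i.factorial : ℂ) * (a.factorial : ℂ))) *
            ((1 - m)⁻¹) ^ (b - i + 1) * ((1 - l - m)⁻¹) ^ (a + i + 1)) := by
  have hlm' : l.re + m.re < 1 := by rw [Complex.add_re] at hlm; exact hlm
  rw [intervalIntegral.integral_of_le zero_le_one, MeasureTheory.integral_Ioc_eq_integral_Ioo]
  have step1 : (∫ x in Ioo (0:ℝ) 1,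
        (∫ y in x..1, ((y / x : ℝ) : ℂ) ^ l * (1 / (y : ℂ)) *
            ((Real.log (y / x) : ℂ)) ^ a / (a.factorial : ℂ)) *
        (∫ y in x..1, ((y / x : ℝ) : ℂ) ^ m * (1 / (y : ℂ)) *
            ((Real.log (y / x) : ℂ)) ^ b / (b.factorial : ℂ)))
      = ∫ x in Ioo (0:ℝ) 1, Fint a l (-Real.log x) * Fint b m (-Real.log x) :=
    setIntegral_congr_fun measurableSet_Ioo
      (fun x hx => by rw [inner_eq a l hx, inner_eq b m hx])
  rw [step1]
  have himg : (fun t : ℝ => Real.exp (-t)) '' (Ioi 0) = Ioo 0 1 := by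
    ext y
    constructor
    · rintro ⟨t, ht, rfl⟩
      exact ⟨Real.exp_pos _, by
        rw [show (1:ℝ) = Real.exp 0 by simp]
        exact Real.exp_lt_exp.2 (by simpa using ht)⟩
    · rintro ⟨hy0, hy1⟩
      exact ⟨-Real.log y, by simpa using Real.log_neg hy0 hy1, by
        simp [Real.exp_log hy0]⟩
  have hinj : Set.InjOn (fun t : ℝ => Real.exp (-t)) (Ioi 0) :=
    (Real.exp_injective.comp neg_injective).injOn
  have hderw : ∀ t ∈ Ioi (0:ℝ), HasDerivWithinAt (fun t : ℝ => Real.exp (-t))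
      (-Real.exp (-t)) (Ioi 0) t := by
    intro t _
    have h := (Real.hasDerivAt_exp (-t)).comp t (hasDerivAt_neg t)
    exact (h.congr_deriv (by ring)).hasDerivWithinAt
  have hcov := integral_image_eq_integral_abs_deriv_smul measurableSet_Ioi hderw hinj
    (fun x => Fint a l (-Real.log x) * Fint b m (-Real.log x))
  rw [himg] at hcov
  rw [hcov]
  rw [← Jlemma a b l m hl hm hlm']
  refine setIntegral_congr_fun measurableSet_Ioi (fun t _ => ?_)
  have h1 : |-Real.exp (-t)| = Real.exp (-t) := by
    rw [abs_neg, abs_of_pos (Real.exp_pos _)]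
  rw [h1, Real.log_exp, neg_neg, Complex.real_smul, Complex.ofReal_exp]
  push_cast
  ring_nf
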